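/- arXiv:1412.6651 — 3 statements merged into one kernel-verified Lean document; each statement's English description precedes it below -/
import Mathlib

section
/- Let a = ηh + (p+1)α and c² = ηhpα, and let φ = 1 - (a + √(a²-4c²))/2 be the smaller root of λ² - (2-a)λ + (1-a+c²) = 0. Then φ > -1 if and only if (2-ηh)(2-pα) > 2α and (2-ηh) + (2-pα) > α. -/
/-- φ > -1 iff (2-ηh)(2-pα) > 2α and (2-ηh) + (2-pα) > α, where φ is the smaller root
of λ² - (2-a)λ + (1-a+c²) = 0 with a = ηh + (p+1)α, c² = ηhpα. -/
theorem easgd_phi_gt_neg_one_iff (η h α : ℝ) (p : ℕ)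
    (a c2 φ : ℝ)
    (ha : a = η * h + (p + 1) * α)
    (hc2 : c2 = η * h * p * α)
    (hdisc : 0 ≤ a ^ 2 - 4 * c2)
    (hφ : φ = 1 - (a + Real.sqrt (a ^ 2 - 4 * c2)) / 2) :
    φ > -1 ↔ ((2 - η * h) * (2 - p * α) > 2 * α ∧ (2 - η * h) + (2 - p * α) > α) := by
  have hnn := Real.sqrt_nonneg (a ^ 2 - 4 * c2)
  have key : φ > -1 ↔ Real.sqrt (a ^ 2 - 4 * c2) < 4 - a := by
    rw [hφ]; constructor <;> intro hx <;> linarith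
  rw [key]
  constructor
  · intro hx
    have hpos : 0 < 4 - a := lt_of_le_of_lt hnn hx
    have hsq : a ^ 2 - 4 * c2 < (4 - a) ^ 2 := (Real.sqrt_lt' hpos).mp hx
    constructor <;> nlinarith [hsq, hpos]
  · rintro ⟨h1, h2⟩
    have hpos : 0 < 4 - a := by nlinarith
    refine (Real.sqrt_lt' hpos).mpr ?_
    nlinarith
end

section
/- Consider the 2×2 real symmetric matrix M = [[1-η-α, α], [α, 1-α]]. Both (real) eigenvalues λ of M satisfy |λ| ≤ 1 if and only if 0 ≤ η ≤ 2 and 0 ≤ α ≤ (4-2η)/(4-η). -/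
theorem ofmat_apply (A : Matrix (Fin 2) (Fin 2) ℝ) (i j : Fin 2) : Matrix.of A i j = A i j := rfl

set_option maxHeartbeats 1000000 in
/-- Stability of the 2×2 symmetric EASGD map: both real eigenvalues λ of
M = [[1-η-α, α], [α, 1-α]] satisfy |λ| ≤ 1 iff 0 ≤ η ≤ 2 and 0 ≤ α ≤ (4-2η)/(4-η). -/
theorem easgd_two_by_two_stability (η α : ℝ) (hη4 : η < 4) :
    (∀ lam : ℝ,
        (∃ v : Fin 2 → ℝ, v ≠ 0 ∧
          (Matrix.of !![1 - η - α, α; α, 1 - α]).mulVec v = lam • v) →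
        |lam| ≤ 1)
    ↔ (0 ≤ η ∧ η ≤ 2 ∧ 0 ≤ α ∧ α ≤ (4 - 2 * η) / (4 - η)) := by
  obtain ⟨s, hs⟩ : ∃ x : ℝ, x = Real.sqrt (η^2 + 4*α^2) := ⟨_, rfl⟩
  have hs0 : (0:ℝ) ≤ s := hs ▸ Real.sqrt_nonneg _
  have hs2 : s^2 = η^2 + 4*α^2 := hs ▸ Real.sq_sqrt (by positivity)
  obtain ⟨lp, hlp⟩ : ∃ x : ℝ, x = (2 - η - 2*α + s)/2 := ⟨_, rfl⟩
  obtain ⟨lm, hlm⟩ : ∃ x : ℝ, x = (2 - η - 2*α - s)/2 := ⟨_, rfl⟩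
  -- the eigenvalue condition is the characteristic equation
  have key : ∀ lam : ℝ,
      (∃ v : Fin 2 → ℝ, v ≠ 0 ∧
        (Matrix.of !![1 - η - α, α; α, 1 - α]).mulVec v = lam • v)
      ↔ (lam = lp ∨ lam = lm) := by
    intro lam
    have h1 : (∃ v : Fin 2 → ℝ, v ≠ 0 ∧
        (Matrix.of !![1 - η - α, α; α, 1 - α]).mulVec v = lam • v)
        ↔ (∃ v : Fin 2 → ℝ, v ≠ 0 ∧
          (Matrix.of !![1 - η - α - lam, α; α, 1 - α - lam]).mulVec v = 0) := by
      constructor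
      · rintro ⟨v, hv, hmv⟩
        refine ⟨v, hv, ?_⟩
        funext i
        have h0 := congrFun hmv 0
        have h1 := congrFun hmv 1
        simp [Matrix.mulVec, dotProduct, Fin.sum_univ_two, ofmat_apply] at h0 h1
        fin_cases i <;>
          simp [Matrix.mulVec, dotProduct, Fin.sum_univ_two, ofmat_apply] <;> linarith
      · rintro ⟨v, hv, hmv⟩
        refine ⟨v, hv, ?_⟩
        funext i
        have h0 := congrFun hmv 0
        have h1 := congrFun hmv 1
        simp [Matrix.mulVec, dotProduct, Fin.sum_univ_two, ofmat_apply] at h0 h1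
        fin_cases i <;>
          simp [Matrix.mulVec, dotProduct, Fin.sum_univ_two, ofmat_apply] <;> linarith
    rw [h1, Matrix.exists_mulVec_eq_zero_iff]
    rw [show (Matrix.of !![1 - η - α - lam, α; α, 1 - α - lam]).det
        = (1 - η - α - lam) * (1 - α - lam) - α * α by
      simp [Matrix.det_fin_two, ofmat_apply]]
    constructor
    · intro h
      have hfac : (lam - lp) * (lam - lm) = 0 := by
        rw [hlp, hlm]; nlinarith [hs2]
      rcases mul_eq_zero.mp hfac with h' | h'
      · left; linarith
      · right; linarith
    · rintro (h | h)
      · rw [h, hlp]; nlinarith [hs2]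
      · rw [h, hlm]; nlinarith [hs2]
  simp only [key]
  constructor
  · intro h
    have hp : |lp| ≤ 1 := h lp (Or.inl rfl)
    have hm : |lm| ≤ 1 := h lm (Or.inr rfl)
    rw [abs_le] at hp hm
    have h1 : s ≤ η + 2*α := by rw [hlp] at hp; linarith [hp.2]
    have h2 : s ≤ 4 - η - 2*α := by rw [hlm] at hm; linarith [hm.1]
    have hsum : 0 ≤ η + 2*α := le_trans hs0 h1
    have hηα : 0 ≤ η * α := by nlinarith [hs2, hs0, h1, hsum]
    have hη0 : 0 ≤ η := by
      by_contra hc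
      push_neg at hc
      have hα : 0 < α := by nlinarith
      nlinarith
    have hα0 : 0 ≤ α := by
      by_contra hc
      push_neg at hc
      have h3 : η ≤ 0 := by nlinarith
      have h4 : η = 0 := le_antisymm h3 hη0
      nlinarith
    have hb : 0 ≤ 4 - η - 2*α := le_trans hs0 h2
    have hkey : α * (4 - η) ≤ 4 - 2*η := by nlinarith [hs2, hs0, h2, hb]
    refine ⟨hη0, by nlinarith, hα0, ?_⟩
    rw [le_div_iff₀ (by linarith)]
    linarith
  · rintro ⟨hη0, hη2, hα0, hαb⟩ lam hl
    have hkey : α * (4 - η) ≤ 4 - 2*η := by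
      rw [le_div_iff₀ (by linarith)] at hαb; linarith
    have hsum : 0 ≤ η + 2*α := by linarith
    have hb : 0 ≤ 4 - η - 2*α := by nlinarith [sq_nonneg (η - 2)]
    have h1 : s ≤ η + 2*α := by
      rw [hs]
      calc Real.sqrt (η^2 + 4*α^2) ≤ Real.sqrt ((η + 2*α)^2) :=
            Real.sqrt_le_sqrt (by nlinarith [mul_nonneg hη0 hα0])
        _ = η + 2*α := Real.sqrt_sq hsum
    have h2 : s ≤ 4 - η - 2*α := by
      rw [hs]
      calc Real.sqrt (η^2 + 4*α^2) ≤ Real.sqrt ((4 - η - 2*α)^2) :=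
            Real.sqrt_le_sqrt (by nlinarith [hkey])
        _ = 4 - η - 2*α := Real.sqrt_sq hb
    rcases hl with h | h
    · rw [h, hlp, abs_le]; constructor <;> linarith
    · rw [h, hlm, abs_le]; constructor <;> linarith
end

section
/- Let M be the 3×3 matrix F¹ = [[1-η-α, 0, α], [0, 1, 0], [α, 0, 1-α]]. If 0 ≤ η ≤ 2 and 0 ≤ α ≤ (4-2η)/(4-η) with η < 4, then every eigenvalue λ of M satisfies |λ| ≤ 1. -/
/-- Stability of the 3×3 EASGD round-robin map F¹ for p = 2: under the stability
condition, every real eigenvalue λ of F¹ satisfies |λ| ≤ 1. -/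
theorem easgd_round_robin_map_stability (η α : ℝ)
    (hη0 : 0 ≤ η) (hη2 : η ≤ 2) (hα0 : 0 ≤ α)
    (hα : α ≤ (4 - 2 * η) / (4 - η)) (hη4 : η < 4) :
    ∀ lam : ℝ,
      (∃ v : Fin 3 → ℝ, v ≠ 0 ∧
        (Matrix.of !![1 - η - α, 0, α; 0, 1, 0; α, 0, 1 - α]).mulVec v = lam • v) →
      |lam| ≤ 1 := by
  rintro lam ⟨v, hv, hveq⟩
  have key : α * (4 - η) ≤ 4 - 2 * η := by
    have h4 : (0:ℝ) < 4 - η := by linarith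
    calc α * (4 - η) ≤ ((4 - 2*η)/(4 - η)) * (4 - η) := by
          exact mul_le_mul_of_nonneg_right hα (le_of_lt h4)
      _ = 4 - 2*η := by field_simp
  have hs : 2 * α + η ≤ 4 := by nlinarith [sq_nonneg (η - 2)]
  have hM : Matrix.of !![1 - η - α, 0, α; 0, 1, 0; α, 0, 1 - α] = !![1 - η - α, 0, α; 0, 1, 0; α, 0, 1 - α] := rfl
  rw [hM] at hveq
  have h0 := congrFun hveq 0
  have h1 := congrFun hveq 1
  have h2 := congrFun hveq 2
  simp [Matrix.mulVec, dotProduct, Fin.sum_univ_three] at h0 h1 h2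
  by_cases hv1 : v 1 = 0
  · have hne : v 0 ≠ 0 ∨ v 2 ≠ 0 := by
      by_contra h
      push_neg at h
      apply hv
      funext i
      fin_cases i <;> simp [h.1, h.2, hv1]
    have e0 : ((lam - (1 - η - α)) * (lam - (1 - α)) - α^2) * v 0 = 0 := by
      linear_combination (-(lam - (1 - α))) * h0 + (-α) * h2
    have e2 : ((lam - (1 - η - α)) * (lam - (1 - α)) - α^2) * v 2 = 0 := by
      linear_combination (-α) * h0 + (-(lam - (1 - η - α))) * h2
    have hp : (lam - (1 - η - α)) * (lam - (1 - α)) - α^2 = 0 := by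
      rcases hne with hn | hn
      · rcases mul_eq_zero.mp e0 with h | h
        · exact h
        · exact absurd h hn
      · rcases mul_eq_zero.mp e2 with h | h
        · exact h
        · exact absurd h hn
    rw [abs_le]
    constructor
    · nlinarith [mul_nonneg hη0 hα0, sq_nonneg (lam + 1)]
    · nlinarith [mul_nonneg hη0 hα0, sq_nonneg (lam - 1)]
  · have : lam = 1 := by
      have := h1
      field_simp at this
      rcases mul_eq_zero.mp (by linarith [this] : (lam - 1) * v 1 = 0) with h | h
      · linarith
      · exact absurd h hv1
    simp [this]
end
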